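/- Let M be a maximal subalgebra of the Lie algebra W_n that is also an A-submodule of W_n (a polynomial subalgebra) and has rank n over A, i.e., M contains n elements that are linearly independent over A. Then there exists a nonzero proper ideal I of A such that M = { D ∈ W_n : D(I) ⊆ I }. -/

import Mathlib

open MvPolynomial

/-- `Wn K n` is the Lie algebra of all `K`-derivations of `K[x_1, …, x_n]`. -/
abbrev Wn (K : Type) [Field K] (n : ℕ) :=
  Derivation K (MvPolynomial (Fin n) K) (MvPolynomial (Fin n) K)

section Aux

variable {K : Type} [Field K] {n : ℕ}

/-- The `A`-linear equivalence `Wn ≃ A^n`, `D ↦ (D (X i))_i`. -/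
noncomputable def wnEquiv :
    Wn K n ≃ₗ[MvPolynomial (Fin n) K] (Fin n → MvPolynomial (Fin n) K) where
  toFun D i := D (X i)
  map_add' D E := rfl
  map_smul' f D := rfl
  invFun := mkDerivation K
  left_inv D := derivation_ext fun i => mkDerivation_X _ _ _
  right_inv g := funext fun i => mkDerivation_X _ _ _

noncomputable def wnBasis : Module.Basis (Fin n) (MvPolynomial (Fin n) K) (Wn K n) :=
  Module.Basis.ofEquivFun wnEquiv

lemma wn_eq_sum (D : Wn K n) :
    D = ∑ i, (D (X i)) • (pderiv i : Wn K n) := by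
  apply (wnEquiv (K := K) (n := n)).injective
  funext j
  rw [map_sum]
  classical
  simp only [Finset.sum_apply, map_smul, Pi.smul_apply]
  have : ∀ i : Fin n, wnEquiv (pderiv i : Wn K n) j = Pi.single (M := fun _ => _) i 1 j := by
    intro i
    show (pderiv i) (X j : MvPolynomial (Fin n) K) = _
    rw [pderiv_X]
  simp only [this]
  rw [Finset.sum_eq_single j]
  · simp [wnEquiv]
  · intro i _ hij; simp [Pi.single_eq_of_ne' hij]
  · intro h; exact absurd (Finset.mem_univ j) h

lemma lie_fsmul (D E : Wn K n) (f : MvPolynomial (Fin n) K) :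
    ⁅D, f • E⁆ = D f • E + f • ⁅D, E⁆ := by
  apply Derivation.ext
  intro g
  simp only [Derivation.commutator_apply, Derivation.smul_apply, Derivation.add_apply,
    Derivation.leibniz, smul_eq_mul]
  ring

end Aux

section Aux3

variable {K : Type} [Field K] {n : ℕ}




lemma my_coeff_pderiv (i : Fin n) (m : Fin n →₀ ℕ) (hm : m i ≠ 0)
    (f : MvPolynomial (Fin n) K) :
    coeff (m - Finsupp.single i 1) (pderiv i f) = (m i : K) * coeff m f := by
  induction f using MvPolynomial.induction_on' with
  | add p q hp hq => simp only [map_add, coeff_add, hp, hq]; ring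
  | monomial s a =>
    rw [pderiv_monomial, coeff_monomial, coeff_monomial]
    by_cases hsi : s i = 0
    · have hsm : s ≠ m := fun h => hm (by rw [← h]; exact hsi)
      rw [if_neg hsm, mul_zero, hsi]
      split <;> simp
    · by_cases hsm : s = m
      · subst hsm; rw [if_pos rfl, if_pos rfl]; push_cast; ring
      · have : s - Finsupp.single i 1 ≠ m - Finsupp.single i 1 := by
          intro h
          apply hsm
          have hs : s = s - Finsupp.single i 1 + Finsupp.single i 1 := by
            ext j
            by_cases hj : j = i
            · subst hj; simp [Finsupp.single_apply]; omega
            · simp [Finsupp.single_apply, Ne.symm hj, Finsupp.tsub_apply]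
          have hm2 : m = m - Finsupp.single i 1 + Finsupp.single i 1 := by
            ext j
            by_cases hj : j = i
            · subst hj; simp [Finsupp.single_apply]; omega
            · simp [Finsupp.single_apply, Ne.symm hj, Finsupp.tsub_apply]
          rw [hs, hm2, h]
        rw [if_neg this, if_neg hsm, mul_zero]



lemma my_totalDegree_pderiv_lt (i : Fin n) (f : MvPolynomial (Fin n) K)
    (hf : 0 < f.totalDegree) : (pderiv i f).totalDegree < f.totalDegree := by
  have hle : (pderiv i f).totalDegree ≤ f.totalDegree - 1 := by
    conv_lhs => rw [f.as_sum, map_sum]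
    apply totalDegree_finsetSum_le
    intro m hm
    rw [pderiv_monomial]
    by_cases hmi : m i = 0
    · simp [hmi]
    · refine (totalDegree_monomial_le _ _).trans ?_
      have hsum : (m - Finsupp.single i 1).sum (fun _ e => e) + 1 = m.sum (fun _ e => e) := by
        have hm2 : m = m - Finsupp.single i 1 + Finsupp.single i 1 := by
          ext j
          by_cases hj : j = i
          · subst hj; simp [Finsupp.single_apply]; omega
          · simp [Finsupp.single_apply, Ne.symm hj, Finsupp.tsub_apply]
        conv_rhs => rw [hm2]
        rw [Finsupp.sum_add_index' (fun _ => rfl) (fun _ _ _ => rfl)]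
        simp
      have hml : m.sum (fun _ e => e) ≤ f.totalDegree := le_totalDegree hm
      have : (m - Finsupp.single i 1).sum (fun _ ↦ id) =
          (m - Finsupp.single i 1).sum (fun _ e => e) := rfl
      omega
  omega

lemma my_eq_C_of_totalDegree_eq_zero (f : MvPolynomial (Fin n) K)
    (h : f.totalDegree = 0) : f = C (coeff 0 f) := by
  have H := (totalDegree_eq_zero_iff (Fin n) f).mp h
  ext m
  by_cases hm : m = 0
  · subst hm; simp
  · rw [coeff_C, if_neg (Ne.symm hm)]
    by_contra hc
    have hms : m ∈ f.support := by rwa [MvPolynomial.mem_support_iff]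
    apply hm
    ext j
    exact H m hms j

lemma one_mem_of_pderiv_stable [CharZero K] (I : Ideal (MvPolynomial (Fin n) K))
    (hI : ∀ (i : Fin n) (f : MvPolynomial (Fin n) K), f ∈ I → pderiv i f ∈ I)
    (f : MvPolynomial (Fin n) K) (hf : f ∈ I) (hf0 : f ≠ 0) :
    (1 : MvPolynomial (Fin n) K) ∈ I := by
  have one_mem_of_const : ∀ f ∈ I, f ≠ 0 → f.totalDegree = 0 →
      (1 : MvPolynomial (Fin n) K) ∈ I := by
    intro f hf hf0 h0
    obtain ⟨c, hfC⟩ : ∃ c, f = C c := ⟨_, my_eq_C_of_totalDegree_eq_zero f h0⟩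
    have hc : c ≠ 0 := fun h => hf0 (by rw [hfC, h, map_zero])
    have h1 : (1 : MvPolynomial (Fin n) K) = C c⁻¹ * f := by
      rw [hfC, ← map_mul, inv_mul_cancel₀ hc, map_one]
    rw [h1]; exact I.mul_mem_left _ hf
  suffices H : ∀ d (f : MvPolynomial (Fin n) K), f ∈ I → f ≠ 0 → f.totalDegree ≤ d →
      (1 : MvPolynomial (Fin n) K) ∈ I from H _ f hf hf0 le_rfl
  intro d
  induction d with
  | zero =>
    intro f hf hf0 hdeg
    have h0 : f.totalDegree = 0 := Nat.le_zero.mp hdeg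
    exact one_mem_of_const f hf hf0 h0
  | succ d ih =>
    intro f hf hf0 hdeg
    by_cases h0 : f.totalDegree = 0
    · exact one_mem_of_const f hf hf0 h0
    · have hpos : 0 < f.totalDegree := Nat.pos_of_ne_zero h0
      -- find m in support with positive degree and some i with m i ≠ 0
      obtain ⟨m, hm, hms⟩ := f.support.exists_mem_eq_sup
        (MvPolynomial.support_nonempty.mpr hf0) (fun s => s.sum fun _ e => e)
      have hmsum : 0 < m.sum fun _ e => e := by
        rw [MvPolynomial.totalDegree] at hpos
        omega
      have : ∃ i, m i ≠ 0 := by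
        by_contra hco
        push_neg at hco
        have : m = 0 := Finsupp.ext fun j => hco j
        rw [this] at hmsum; simp at hmsum
      obtain ⟨i, hi⟩ := this
      have hpd : pderiv i f ≠ 0 := by
        intro hz
        have := my_coeff_pderiv i m hi f
        rw [hz] at this
        simp only [coeff_zero] at this
        have hcm : coeff m f ≠ 0 := (MvPolynomial.mem_support_iff).mp hm
        have : (m i : K) * coeff m f ≠ 0 :=
          mul_ne_zero (Nat.cast_ne_zero.mpr hi) hcm
        exact this (by rw [← my_coeff_pderiv i m hi f, hz, coeff_zero])
      have hlt := my_totalDegree_pderiv_lt i f hpos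
      exact ih (pderiv i f) (hI i f hf) hpd (by omega)

end Aux3

set_option maxHeartbeats 1000000 in
/-- A maximal Lie subalgebra `M` of `Wn` that is an `A`-submodule (a polynomial
subalgebra) and has rank `n` over `A` is the stabilizer
`M = { D ∈ Wn : D(I) ⊆ I }` of some nonzero proper ideal `I` of `A`. -/
theorem polynomial_maximal_subalgebra_of_rank_n_is_ideal_stabilizer
    {K : Type} [Field K] [IsAlgClosed K] [CharZero K] {n : ℕ}
    (M : LieSubalgebra K (Wn K n)) (hMtop : M ≠ ⊤)
    (hmax : ∀ L : LieSubalgebra K (Wn K n), M < L → L = ⊤)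
    (hmod : ∀ f : MvPolynomial (Fin n) K, ∀ D ∈ M, f • D ∈ M)
    (hrk : ∃ v : Fin n → Wn K n, (∀ i, v i ∈ M) ∧
      LinearIndependent (MvPolynomial (Fin n) K) v) :
    ∃ I : Ideal (MvPolynomial (Fin n) K), I ≠ ⊥ ∧ I ≠ ⊤ ∧
      (M : Set (Wn K n)) = {D : Wn K n | ∀ f ∈ I, D f ∈ I} := by
  classical
  obtain ⟨v, hvM, hv⟩ := hrk
  -- Step 1: for each i, find a nonzero c with c • ∂ᵢ ∈ M
  have key : ∀ i : Fin n, ∃ c : MvPolynomial (Fin n) K,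
      c ≠ 0 ∧ c • (pderiv i : Wn K n) ∈ M := by
    intro i
    have hdep : ¬ LinearIndependent (MvPolynomial (Fin n) K)
        (Fin.cons (pderiv i : Wn K n) v) := by
      intro h
      have := (wnBasis (K := K) (n := n)).card_le_card_of_linearIndependent h
      simp at this
    rw [Fintype.not_linearIndependent_iff] at hdep
    obtain ⟨g, hg, j, hj⟩ := hdep
    rw [Fin.sum_univ_succ] at hg
    simp only [Fin.cons_zero, Fin.cons_succ] at hg
    have hg0 : g 0 ≠ 0 := by
      intro h0
      rw [h0, zero_smul, zero_add] at hg
      have hall := Fintype.linearIndependent_iff.mp hv (fun k => g k.succ) hg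
      refine hj ?_
      rcases Fin.eq_zero_or_eq_succ j with rfl | ⟨k, rfl⟩
      · exact h0
      · exact hall k
    refine ⟨g 0, hg0, ?_⟩
    have heq : g 0 • (pderiv i : Wn K n) = -∑ k, g k.succ • v k := by
      rw [eq_neg_iff_add_eq_zero]; exact hg
    rw [heq]
    exact neg_mem (sum_mem fun k _ => hmod _ _ (hvM k))
  choose c hc0 hcM using key
  -- Step 2: the ideal I = {f : f • Wn ⊆ M}
  let I : Ideal (MvPolynomial (Fin n) K) :=
    { carrier := {f | ∀ D : Wn K n, f • D ∈ M}
      add_mem' := by intro a b ha hb D; rw [add_smul]; exact add_mem (ha D) (hb D)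
      zero_mem' := by intro D; rw [zero_smul]; exact zero_mem M
      smul_mem' := by intro r f hf D; rw [smul_eq_mul, mul_smul]; exact hmod r _ (hf D) }
  have hImem : ∀ f : MvPolynomial (Fin n) K, f ∈ I ↔ ∀ D : Wn K n, f • D ∈ M :=
    fun f => Iff.rfl
  -- ∏ c i ∈ I, so I ≠ ⊥
  have hprodne : (∏ i, c i) ≠ 0 := Finset.prod_ne_zero_iff.mpr fun i _ => hc0 i
  have hfI : (∏ i, c i) ∈ I := by
    rw [hImem]
    intro D
    rw [wn_eq_sum D, Finset.smul_sum]
    refine sum_mem fun i _ => ?_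
    have h1 : (∏ j, c j) • (pderiv i : Wn K n) ∈ M := by
      have hsplit : (∏ j, c j) = (∏ j ∈ Finset.univ.erase i, c j) * c i := by
        rw [mul_comm]; exact (Finset.mul_prod_erase _ _ (Finset.mem_univ i)).symm
      rw [hsplit, mul_smul]
      exact hmod _ _ (hcM i)
    have hcomm : (∏ j, c j) • ((D (X i)) • (pderiv i : Wn K n)) =
        (D (X i)) • ((∏ j, c j) • (pderiv i : Wn K n)) := smul_comm _ _ _
    rw [hcomm]
    exact hmod _ _ h1
  have hIbot : I ≠ ⊥ := by
    intro h
    rw [h, Ideal.mem_bot] at hfI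
    exact hprodne hfI
  have hInetop : I ≠ ⊤ := by
    intro h
    apply hMtop
    rw [eq_top_iff]
    intro D _
    have h1 : (1 : MvPolynomial (Fin n) K) ∈ I := h ▸ Submodule.mem_top
    have h2 := (hImem 1).mp h1 D
    rwa [one_smul] at h2
  -- Step 3: the stabilizer L of I
  let L : LieSubalgebra K (Wn K n) :=
    { carrier := {D : Wn K n | ∀ f ∈ I, D f ∈ I}
      add_mem' := by
        intro D E hD hE f hf
        rw [Derivation.add_apply]
        exact I.add_mem (hD f hf) (hE f hf)
      zero_mem' := by intro f hf; rw [Derivation.zero_apply]; exact I.zero_mem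
      smul_mem' := by
        intro r D hD f hf
        rw [Derivation.smul_apply]
        exact I.smul_of_tower_mem r (hD f hf)
      lie_mem' := by
        intro D E hD hE f hf
        rw [Derivation.commutator_apply]
        exact I.sub_mem (hD _ (hE f hf)) (hE _ (hD f hf)) }
  have hLmem : ∀ D : Wn K n, D ∈ L ↔ ∀ f ∈ I, D f ∈ I := fun D => Iff.rfl
  -- M ≤ L
  have hMleL : M ≤ L := by
    intro D hD
    rw [hLmem]
    intro f hf
    rw [hImem]
    intro E
    have h1 : ⁅D, f • E⁆ ∈ M := M.lie_mem hD ((hImem f).mp hf E)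
    have h2 : f • ⁅D, E⁆ ∈ M := (hImem f).mp hf _
    have h3 : (D f) • E = ⁅D, f • E⁆ - f • ⁅D, E⁆ := by rw [lie_fsmul]; abel
    rw [h3]
    exact sub_mem h1 h2
  -- L ≠ ⊤
  have hLtop : L ≠ ⊤ := by
    intro h
    have hpd : ∀ (i : Fin n) (f : MvPolynomial (Fin n) K), f ∈ I → pderiv i f ∈ I := by
      intro i f hf
      have hp : (pderiv i : Wn K n) ∈ L := by rw [h]; exact LieSubalgebra.mem_top _
      exact (hLmem _).mp hp f hf
    exact hInetop (I.eq_top_iff_one.mpr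
      (one_mem_of_pderiv_stable I hpd _ hfI hprodne))
  -- conclude
  have hMeqL : M = L := by
    by_contra hne
    exact hLtop (hmax L (lt_of_le_of_ne hMleL hne))
  exact ⟨I, hIbot, hInetop, by rw [hMeqL]; rfl⟩
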